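/- Let Δ be a simplicial complex on [k] containing all singletons {i} for i ∈ [k], and let q be a prime power. Then the minimum nonzero weight of the code C_Δ (the minimum over nonzero u ∈ F_q^k of the number of nonempty faces σ with Σ_{v∈σ} u_v ≠ 0) equals the minimum over vertices i ∈ [k] of the number of faces of Δ containing i. -/
import Mathlib


theorem stmt_3 (k : ℕ) (hk : 0 < k) (F : Type*) [Field F] [Fintype F] [DecidableEq F]
    (Δ : Finset (Finset (Fin k)))
    (hΔ : ∀ σ ∈ Δ, ∀ τ ⊆ σ, τ ∈ Δ)
    (hsingl : ∀ i : Fin k, {i} ∈ Δ) :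
    sInf {w : ℕ | ∃ u : Fin k → F, u ≠ 0 ∧
        w = (Δ.filter (fun σ => σ ≠ ∅ ∧ ∑ v ∈ σ, u v ≠ 0)).card}
      = sInf {m : ℕ | ∃ i : Fin k, m = (Δ.filter (fun σ => i ∈ σ)).card} := by
  set A := {w : ℕ | ∃ u : Fin k → F, u ≠ 0 ∧
      w = (Δ.filter (fun σ => σ ≠ ∅ ∧ ∑ v ∈ σ, u v ≠ 0)).card} with hA
  set B := {m : ℕ | ∃ i : Fin k, m = (Δ.filter (fun σ => i ∈ σ)).card} with hB
  have hkey : ∀ u : Fin k → F, ∀ i : Fin k, u i ≠ 0 →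
      (Δ.filter (fun σ => i ∈ σ)).card ≤
      (Δ.filter (fun σ => σ ≠ ∅ ∧ ∑ v ∈ σ, u v ≠ 0)).card := by
    intro u i hui
    apply Finset.card_le_card_of_injOn
      (fun σ => if ∑ v ∈ σ, u v ≠ 0 then σ else σ.erase i)
    · intro σ hσ
      simp only [Finset.mem_coe, Finset.mem_filter] at hσ ⊢
      by_cases h : ∑ v ∈ σ, u v ≠ 0
      · rw [if_pos h]
        exact ⟨hσ.1, Finset.ne_empty_of_mem hσ.2, h⟩
      · push_neg at h
        simp only [h, ne_eq, not_true_eq_false, if_false]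
        have hsum : ∑ v ∈ σ.erase i, u v = - u i := by
          rw [Finset.sum_erase_eq_sub hσ.2, h, zero_sub]
        refine ⟨hΔ σ hσ.1 _ (Finset.erase_subset i σ), ?_, ?_⟩
        · intro he
          rw [he, Finset.sum_empty] at hsum
          exact hui (neg_eq_zero.mp hsum.symm)
        · rw [hsum]; simpa using hui
    · intro σ hσ τ hτ heq
      simp only [Finset.mem_coe, Finset.mem_filter] at hσ hτ
      simp only at heq
      by_cases h1 : ∑ v ∈ σ, u v ≠ 0 <;> by_cases h2 : ∑ v ∈ τ, u v ≠ 0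
      · simpa [h1, h2] using heq
      · rw [if_pos h1, if_neg h2] at heq
        exact absurd (heq ▸ hσ.2) (Finset.notMem_erase i τ)
      · rw [if_neg h1, if_pos h2] at heq
        exact absurd (heq ▸ hτ.2) (Finset.notMem_erase i σ)
      · rw [if_neg h1, if_neg h2] at heq
        have := congrArg (insert i) heq
        rwa [Finset.insert_erase hσ.2, Finset.insert_erase hτ.2] at this
  have hBA : B ⊆ A := by
    rintro m ⟨i, rfl⟩
    refine ⟨fun v => if v = i then 1 else 0, ?_, ?_⟩
    · intro h
      have := congrFun h i
      simp at this
    · congr 1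
      apply Finset.filter_congr
      intro σ _
      have hsum : ∑ v ∈ σ, (if v = i then (1 : F) else 0) =
          if i ∈ σ then 1 else 0 := by
        rw [Finset.sum_ite_eq' σ i (fun _ => (1 : F))]
      rw [hsum]
      by_cases h : i ∈ σ
      · simp [h, Finset.ne_empty_of_mem h]
      · simp [h]
  have hBne : B.Nonempty := ⟨_, ⟨0, hk⟩, rfl⟩
  have hAne : A.Nonempty := ⟨_, hBA ⟨⟨0, hk⟩, rfl⟩⟩
  apply le_antisymm
  · exact Nat.sInf_le (hBA (Nat.sInf_mem hBne))
  · obtain ⟨u, hu, hw⟩ := Nat.sInf_mem hAne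
    obtain ⟨i, hi⟩ : ∃ i, u i ≠ 0 := by
      by_contra h
      push_neg at h
      exact hu (funext h)
    calc sInf B ≤ (Δ.filter (fun σ => i ∈ σ)).card := Nat.sInf_le ⟨i, rfl⟩
      _ ≤ _ := hkey u i hi
      _ = sInf A := hw.symm
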